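/- There exists a smallest joint root ẑ ∈ [0,∞)^V of the functions f^{r,α,β}, (r,α,β) ∈ V, in the sense that ẑ is a joint root and ẑ ≤ z̄ componentwise for every joint root z̄. Moreover, z* is a joint root of the functions f^{r,α,β}, and both ẑ ∈ P₀ and z* ∈ P₀. -/

import Mathlib

open MeasureTheory Filter Set Topology

open Classical in
/-- Probability that a Poisson(q) random variable equals `k`. -/
noncomputable def poisProb (q : ℝ) (k : ℕ) : ℝ := Real.exp (-q) * q ^ k / (Nat.factorial k : ℝ)

open Classical in
/-- `psiMulti q l = P(∑_{s=1}^R s · Q_s ≥ l)` for independent `Q_s ~ Poi(q s)`;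
in particular it equals `1` for `l ≤ 0` and `0` for `l = ∞`. -/
noncomputable def psiMulti {R : ℕ} (q : Fin R → ℝ) (l : WithTop ℤ) : ℝ :=
  ∑' k : Fin R → ℕ,
    if l ≤ ((((∑ s : Fin R, ((s : ℕ) + 1) * k s) : ℕ) : ℤ) : WithTop ℤ) then
      ∏ s, poisProb (q s) (k s)
    else 0

/-- Embedding of `ℕ ∪ {∞}` into `ℤ ∪ {∞}`. -/
noncomputable def natCastTop (c : WithTop ℕ) : WithTop ℤ := WithTop.map (fun n : ℕ => (n : ℤ)) c

/-- The function `f^{r,α,β}(z) = E[W^{+,r,α} ψ(∑_γ W^{-,1,γ} z^{1,β,γ}, …, ∑_γ W^{-,R,γ} z^{R,β,γ}; C)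
1{A=β}] − z^{r,α,β}` (with `v = (r,α,β)`). -/
noncomputable def fV {Ω : Type*} [MeasureSpace Ω] {R T : ℕ}
    (Wm Wp : Ω → Fin R → Fin T → ℝ) (C : Ω → WithTop ℕ) (A : Ω → Fin T)
    (v : Fin R × Fin T × Fin T) (z : Fin R × Fin T × Fin T → ℝ) : ℝ :=
  (∫ ω, if A ω = v.2.2 then
      Wp ω v.1 v.2.1 *
        psiMulti (fun s => ∑ γ, Wm ω s γ * z (s, v.2.2, γ)) (natCastTop (C ω))
    else 0) - z v

/-- The function `g(z) = ∑_β E[S ψ(…; C) 1{A=β}]`. -/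
noncomputable def gV {Ω : Type*} [MeasureSpace Ω] {R T : ℕ}
    (Wm : Ω → Fin R → Fin T → ℝ) (S : Ω → ℝ) (C : Ω → WithTop ℕ) (A : Ω → Fin T)
    (z : Fin R × Fin T × Fin T → ℝ) : ℝ :=
  ∑ β, ∫ ω, if A ω = β then
      S ω * psiMulti (fun s => ∑ γ, Wm ω s γ * z (s, β, γ)) (natCastTop (C ω))
    else 0

/-- The nonnegative orthant `[0,∞)^V`. -/
def nonnegV (R T : ℕ) : Set ((Fin R × Fin T × Fin T) → ℝ) := {z | ∀ v, 0 ≤ z v}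

/-- The set `P = ∩_{(r,α,β) ∈ V} {z ∈ [0,∞)^V : f^{r,α,β}(z) ≥ 0}`. -/
noncomputable def PsetV {Ω : Type*} [MeasureSpace Ω] {R T : ℕ}
    (Wm Wp : Ω → Fin R → Fin T → ℝ) (C : Ω → WithTop ℕ) (A : Ω → Fin T) :
    Set ((Fin R × Fin T × Fin T) → ℝ) :=
  {z | z ∈ nonnegV R T ∧ ∀ v, 0 ≤ fV Wm Wp C A v z}

/-- `P₀`, the largest connected subset of `P` containing `0`. -/
noncomputable def P0V {Ω : Type*} [MeasureSpace Ω] {R T : ℕ}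
    (Wm Wp : Ω → Fin R → Fin T → ℝ) (C : Ω → WithTop ℕ) (A : Ω → Fin T) :
    Set ((Fin R × Fin T × Fin T) → ℝ) :=
  connectedComponentIn (PsetV Wm Wp C A) 0

/-- `z*`, defined by `(z*)^{r,α,β} = sup_{z ∈ P₀} z^{r,α,β}`. -/
noncomputable def zStarV {Ω : Type*} [MeasureSpace Ω] {R T : ℕ}
    (Wm Wp : Ω → Fin R → Fin T → ℝ) (C : Ω → WithTop ℕ) (A : Ω → Fin T) :
    (Fin R × Fin T × Fin T) → ℝ :=
  fun v => sSup ((fun z => z v) '' P0V Wm Wp C A)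

section PoisBasic

open Real

lemma pois_nonneg {q : ℝ} (hq : 0 ≤ q) (k : ℕ) : 0 ≤ poisProb q k := by
  unfold poisProb; positivity

lemma pois_hasSum (q : ℝ) : HasSum (fun n => poisProb q n) 1 := by
  unfold poisProb
  apply (hasSum_mul_left_iff (exp_ne_zero q)).mp
  simp only [mul_one]
  have : (fun i ↦ rexp q * (rexp (-q) * q ^ i / ↑(Nat.factorial i))) =
      fun i ↦ q ^ i / ↑(Nat.factorial i) := by
    ext n
    rw [mul_div_assoc, exp_neg, ← mul_assoc, ← div_eq_mul_inv, div_self (exp_ne_zero q), one_mul]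
  rw [this, Real.exp_eq_exp_ℝ]
  exact NormedSpace.expSeries_div_hasSum_exp q

lemma pois_summable (q : ℝ) : Summable (fun n => poisProb q n) := (pois_hasSum q).summable

lemma pois_tsum (q : ℝ) : ∑' n, poisProb q n = 1 := (pois_hasSum q).tsum_eq

lemma pois_partial_le_one {q : ℝ} (hq : 0 ≤ q) (F : Finset ℕ) :
    ∑ j ∈ F, poisProb q j ≤ 1 := by
  rw [← pois_tsum q]
  exact Summable.sum_le_tsum F (fun n _ => pois_nonneg hq n) (pois_summable q)

/-- derivative of a single Poisson pmf term in the rate. -/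
lemma pois_hasDerivAt (n : ℕ) (x : ℝ) :
    HasDerivAt (fun q => poisProb q n)
      ((if n = 0 then 0 else poisProb x (n-1)) - poisProb x n) x := by
  have h1 : HasDerivAt (fun q : ℝ => Real.exp (-q)) (-Real.exp (-x)) x := by
    simpa using ((hasDerivAt_id x).neg.exp)
  have h2 : HasDerivAt (fun q : ℝ => q ^ n) ((n : ℝ) * x ^ (n - 1)) x := by
    simpa using hasDerivAt_pow n x
  have h3 : HasDerivAt (fun q => Real.exp (-q) * q ^ n / (Nat.factorial n : ℝ))
      ((-Real.exp (-x) * x ^ n + Real.exp (-x) * ((n : ℝ) * x ^ (n - 1))) / (Nat.factorial n : ℝ)) x :=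
    (h1.mul h2).div_const (Nat.factorial n : ℝ)
  have : (fun q => poisProb q n) = fun q => Real.exp (-q) * q ^ n / (Nat.factorial n : ℝ) := by
    funext q; rfl
  rw [this]
  convert h3 using 1
  rcases Nat.eq_zero_or_pos n with hn | hn
  · subst hn; simp [poisProb]
  · have hn' : n ≠ 0 := Nat.pos_iff_ne_zero.mp hn
    simp only [if_neg hn']
    unfold poisProb
    obtain ⟨m, rfl⟩ := Nat.exists_eq_succ_of_ne_zero hn'
    have hfac : (Nat.factorial (m+1) : ℝ) = (m+1) * Nat.factorial m := by
      push_cast [Nat.factorial_succ]; ring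
    have hm1 : (Nat.factorial m : ℝ) ≠ 0 := Nat.cast_ne_zero.mpr (Nat.factorial_ne_zero m)
    have hm2 : ((m:ℝ)+1) ≠ 0 := by positivity
    simp only [Nat.succ_sub_one]
    field_simp [hfac]
    simp only [Nat.succ_eq_add_one, Nat.factorial_succ]; push_cast; ring

end PoisBasic
section PoisMono

lemma pois_head_anti (m : ℕ) :
    AntitoneOn (fun x => ∑ n ∈ Finset.range m, poisProb x n) (Set.Ici (0:ℝ)) := by
  have hder : ∀ x : ℝ, HasDerivAt (fun y => ∑ n ∈ Finset.range m, poisProb y n)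
      (-(if m = 0 then 0 else poisProb x (m-1))) x := by
    intro x
    have h := HasDerivAt.fun_sum (fun n (_ : n ∈ Finset.range m) => pois_hasDerivAt n x)
    refine h.congr_deriv ?_
    set v : ℕ → ℝ := fun n => if n = 0 then 0 else poisProb x (n-1) with hv
    have hterm : ∀ n, ((if n = 0 then (0:ℝ) else poisProb x (n-1)) - poisProb x n)
        = v n - v (n+1) := by intro n; simp [hv]
    have ht : ∑ i ∈ Finset.range m,
        ((if i = 0 then (0:ℝ) else poisProb x (i-1)) - poisProb x i) = v 0 - v m := by
      rw [Finset.sum_congr rfl (fun n _ => hterm n)]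
      exact Finset.sum_range_sub' v m
    rw [ht]
    simp [hv]
  apply antitoneOn_of_deriv_nonpos (convex_Ici 0)
  · exact Continuous.continuousOn
      (Differentiable.continuous (fun x => (hder x).differentiableAt))
  · exact fun x _ => (hder x).differentiableAt.differentiableWithinAt
  · intro x hx
    rw [interior_Ici] at hx
    rw [(hder x).deriv]
    rcases Nat.eq_zero_or_pos m with h0 | h0
    · simp [h0]
    · have : m ≠ 0 := Nat.pos_iff_ne_zero.mp h0
      simp only [if_neg this, neg_nonpos]
      exact pois_nonneg (le_of_lt hx) _

lemma pois_oneD_summable {cond : ℕ → Prop} [DecidablePred cond] {x : ℝ} (hx : 0 ≤ x) :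
    Summable (fun n => if cond n then poisProb x n else 0) := by
  apply Summable.of_nonneg_of_le (fun n => ?_) (fun n => ?_) (pois_summable x)
  · by_cases h : cond n <;> simp [h, pois_nonneg hx]
  · by_cases h : cond n <;> simp [h, pois_nonneg hx]

lemma pois_oneD_mono {cond : ℕ → Prop} [DecidablePred cond]
    (hcond : ∀ p n : ℕ, p ≤ n → cond p → cond n) {a b : ℝ} (ha : 0 ≤ a) (hab : a ≤ b) :
    ∑' n, (if cond n then poisProb a n else 0) ≤ ∑' n, (if cond n then poisProb b n else 0) := by
  have hb : (0:ℝ) ≤ b := le_trans ha hab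
  by_cases hex : ∃ n, cond n
  · set m := Nat.find hex with hm
    have hiff : ∀ n, cond n ↔ m ≤ n := by
      intro n
      constructor
      · exact fun h => Nat.find_min' hex h
      · exact fun h => hcond m n h (Nat.find_spec hex)
    have key : ∀ x : ℝ, 0 ≤ x →
        ∑' n, (if cond n then poisProb x n else 0)
          = 1 - ∑ j ∈ Finset.range m, poisProb x j := by
      intro x hx
      have hsumm : Summable (fun n => if cond n then poisProb x n else 0) :=
        pois_oneD_summable hx
      have h1 := Summable.sum_add_tsum_nat_add (f := fun n => if cond n then poisProb x n else 0) m hsumm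
      have h2 := Summable.sum_add_tsum_nat_add (f := fun n => poisProb x n) m (pois_summable x)
      have e1 : ∑ j ∈ Finset.range m, (if cond j then poisProb x j else 0) = 0 := by
        apply Finset.sum_eq_zero
        intro j hj
        rw [if_neg]
        rw [hiff j]
        exact not_le.mpr (Finset.mem_range.mp hj)
      have e2 : (fun i => if cond (i + m) then poisProb x (i + m) else 0)
          = fun i => poisProb x (i + m) := by
        funext i
        rw [if_pos ((hiff (i+m)).mpr (Nat.le_add_left m i))]
      rw [e1, zero_add, e2] at h1
      rw [pois_tsum x] at h2
      have h1' : ∑' (i:ℕ), poisProb x (i+m) = ∑' n, (if cond n then poisProb x n else 0) := h1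
      have h2' : (∑ i ∈ Finset.range m, poisProb x i) + ∑' (i:ℕ), poisProb x (i+m) = 1 := h2
      linarith
    rw [key a ha, key b hb]
    have := pois_head_anti m (Set.mem_Ici.mpr ha) (Set.mem_Ici.mpr hb) hab
    linarith
  · push_neg at hex
    simp [hex]

end PoisMono
section MultiBasic

variable {R : ℕ}

/-- product of Poisson pmf values -/
noncomputable def prodPois (q : Fin R → ℝ) (k : Fin R → ℕ) : ℝ := ∏ s, poisProb (q s) (k s)

/-- total value `∑ (s+1) k_s` as an element of `WithTop ℤ`. -/
noncomputable def natN (k : Fin R → ℕ) : WithTop ℤ :=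
  ((((∑ s : Fin R, ((s : ℕ) + 1) * k s) : ℕ) : ℤ) : WithTop ℤ)

open Classical in
/-- single term of `psiMulti`. -/
noncomputable def psiTerm (q : Fin R → ℝ) (l : WithTop ℤ) (k : Fin R → ℕ) : ℝ :=
  if l ≤ natN k then prodPois q k else 0

lemma psiMulti_eq_tsum (q : Fin R → ℝ) (l : WithTop ℤ) :
    psiMulti q l = ∑' k, psiTerm q l k := rfl

lemma summable_pi_prod {f : Fin R → ℕ → ℝ} {c : Fin R → ℝ}
    (h0 : ∀ s n, 0 ≤ f s n) (hc : ∀ (s) (F : Finset ℕ), ∑ j ∈ F, f s j ≤ c s) :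
    Summable (fun k : Fin R → ℕ => ∏ s, f s (k s)) ∧
      ∑' k : Fin R → ℕ, ∏ s, f s (k s) ≤ ∏ s, c s := by
  have hcnn : ∀ s, 0 ≤ c s := fun s => le_trans (le_of_eq (Finset.sum_empty).symm) (hc s ∅)
  have hnn : ∀ k : Fin R → ℕ, 0 ≤ ∏ s, f s (k s) :=
    fun k => Finset.prod_nonneg fun s _ => h0 s (k s)
  have hbd : ∀ F : Finset (Fin R → ℕ), ∑ k ∈ F, ∏ s, f s (k s) ≤ ∏ s, c s := by
    intro F
    set m := (F.sup fun k => Finset.univ.sup k) + 1 with hm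
    have hsub : F ⊆ Fintype.piFinset (fun _ : Fin R => Finset.range m) := by
      intro k hk
      rw [Fintype.mem_piFinset]
      intro s
      rw [Finset.mem_range, hm]
      have h1 : k s ≤ Finset.univ.sup k := Finset.le_sup (Finset.mem_univ s)
      have h2 : Finset.univ.sup k ≤ F.sup fun k => Finset.univ.sup k :=
        Finset.le_sup (f := fun k => Finset.univ.sup k) hk
      omega
    calc ∑ k ∈ F, ∏ s, f s (k s)
        ≤ ∑ k ∈ Fintype.piFinset (fun _ : Fin R => Finset.range m), ∏ s, f s (k s) :=
          Finset.sum_le_sum_of_subset_of_nonneg hsub (fun k _ _ => hnn k)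
      _ = ∏ s, ∑ j ∈ Finset.range m, f s j := (Finset.prod_univ_sum _ _).symm
      _ ≤ ∏ s, c s := Finset.prod_le_prod
          (fun s _ => Finset.sum_nonneg fun j _ => h0 s j) (fun s _ => hc s _)
  have hsumm : Summable (fun k : Fin R → ℕ => ∏ s, f s (k s)) :=
    summable_of_sum_le hnn hbd
  exact ⟨hsumm, Summable.tsum_le_of_sum_le hsumm hbd⟩

lemma prodPois_nonneg {q : Fin R → ℝ} (hq : ∀ s, 0 ≤ q s) (k : Fin R → ℕ) :
    0 ≤ prodPois q k := Finset.prod_nonneg fun s _ => pois_nonneg (hq s) _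

lemma prodPois_summable {q : Fin R → ℝ} (hq : ∀ s, 0 ≤ q s) :
    Summable (prodPois q) ∧ ∑' k, prodPois q k ≤ 1 := by
  have := summable_pi_prod (f := fun s n => poisProb (q s) n) (c := fun _ => 1)
    (fun s n => pois_nonneg (hq s) n) (fun s F => pois_partial_le_one (hq s) F)
  simp only [Finset.prod_const_one] at this; exact this

open Classical in
lemma psiTerm_nonneg {q : Fin R → ℝ} (hq : ∀ s, 0 ≤ q s) (l : WithTop ℤ) (k : Fin R → ℕ) :
    0 ≤ psiTerm q l k := by
  unfold psiTerm
  by_cases h : l ≤ natN k <;> simp [h, prodPois_nonneg hq]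

open Classical in
lemma psiTerm_le {q : Fin R → ℝ} (hq : ∀ s, 0 ≤ q s) (l : WithTop ℤ) (k : Fin R → ℕ) :
    psiTerm q l k ≤ prodPois q k := by
  unfold psiTerm
  by_cases h : l ≤ natN k <;> simp [h, prodPois_nonneg hq]

lemma psiTerm_summable {q : Fin R → ℝ} (hq : ∀ s, 0 ≤ q s) (l : WithTop ℤ) :
    Summable (psiTerm q l) :=
  Summable.of_nonneg_of_le (psiTerm_nonneg hq l) (psiTerm_le hq l) (prodPois_summable hq).1

lemma psiMulti_nonneg {q : Fin R → ℝ} (hq : ∀ s, 0 ≤ q s) (l : WithTop ℤ) :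
    0 ≤ psiMulti q l := by
  rw [psiMulti_eq_tsum]
  exact tsum_nonneg (psiTerm_nonneg hq l)

lemma psiMulti_le_one {q : Fin R → ℝ} (hq : ∀ s, 0 ≤ q s) (l : WithTop ℤ) :
    psiMulti q l ≤ 1 := by
  rw [psiMulti_eq_tsum]
  calc ∑' k, psiTerm q l k ≤ ∑' k, prodPois q k :=
        Summable.tsum_le_tsum (psiTerm_le hq l) (psiTerm_summable hq l) (prodPois_summable hq).1
    _ ≤ 1 := (prodPois_summable hq).2

end MultiBasic
section MultiMono

open Classical in
lemma psiMulti_update_mono {R : ℕ} (r : Fin R → ℝ) (hr : ∀ t, 0 ≤ r t) (s : Fin R)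
    {a b : ℝ} (ha : 0 ≤ a) (hab : a ≤ b) (l : WithTop ℤ) :
    psiMulti (Function.update r s a) l ≤ psiMulti (Function.update r s b) l := by
  classical
  have hb : (0:ℝ) ≤ b := le_trans ha hab
  set e := Equiv.funSplitAt s ℕ with he
  set c : ({t : Fin R // t ≠ s} → ℕ) → ℕ :=
    fun k' => ∑ t : {t : Fin R // t ≠ s}, (((t : Fin R) : ℕ) + 1) * k' t with hcdef
  set Pk : ({t : Fin R // t ≠ s} → ℕ) → ℝ :=
    fun k' => ∏ t : {t : Fin R // t ≠ s}, poisProb (r (t : Fin R)) (k' t) with hPkdef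
  have hPknn : ∀ k', 0 ≤ Pk k' :=
    fun k' => Finset.prod_nonneg fun t _ => pois_nonneg (hr _) _
  have hupd : ∀ x : ℝ, 0 ≤ x → ∀ t, 0 ≤ Function.update r s x t := by
    intro x hx t
    by_cases h : t = s
    · subst h; rw [Function.update_self]; exact hx
    · rw [Function.update_of_ne h]; exact hr t
  -- decomposition of a single term
  have hterm : ∀ (x : ℝ) (n : ℕ) (k' : {t : Fin R // t ≠ s} → ℕ),
      psiTerm (Function.update r s x) l (e.symm (n, k'))
        = Pk k' * (if l ≤ ((((((s:ℕ)+1) * n + c k' : ℕ)) : ℤ) : WithTop ℤ)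
            then poisProb x n else 0) := by
    intro x n k'
    have hu_s : e.symm (n, k') s = n := by
      rw [he, Equiv.funSplitAt_symm_apply]; simp
    have hu_t : ∀ (t : Fin R) (h : t ≠ s), e.symm (n, k') t = k' ⟨t, h⟩ := by
      intro t h
      rw [he, Equiv.funSplitAt_symm_apply]; simp [h]
    have herase : ∀ (g : Fin R → ℕ → ℕ → ℝ),True := fun _ => trivial
    have hNnat : (∑ t : Fin R, ((t : ℕ) + 1) * (e.symm (n, k')) t)
        = ((s:ℕ)+1) * n + c k' := by
      rw [← Finset.add_sum_erase Finset.univ _ (Finset.mem_univ s)]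
      congr 1
      · rw [hu_s]
      · rw [hcdef]
        rw [Finset.sum_subtype (p := fun t => t ≠ s) (Finset.univ.erase s)
          (fun t => by simp [Finset.mem_erase]) (fun t => ((t : ℕ) + 1) * (e.symm (n, k')) t)]
        apply Finset.sum_congr rfl
        intro t _
        rw [hu_t (t : Fin R) t.2]
    have hP : prodPois (Function.update r s x) (e.symm (n, k')) = poisProb x n * Pk k' := by
      unfold prodPois
      rw [← Finset.mul_prod_erase Finset.univ _ (Finset.mem_univ s)]
      congr 1
      · rw [hu_s, Function.update_self]
      · rw [hPkdef]
        rw [Finset.prod_subtype (p := fun t => t ≠ s) (Finset.univ.erase s)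
          (fun t => by simp [Finset.mem_erase])
          (fun t => poisProb (Function.update r s x t) ((e.symm (n, k')) t))]
        apply Finset.prod_congr rfl
        intro t _
        rw [hu_t (t : Fin R) t.2, Function.update_of_ne t.2]
    unfold psiTerm
    rw [hP]
    unfold natN
    rw [hNnat]
    by_cases hcnd : l ≤ ((((((s:ℕ)+1) * n + c k' : ℕ)) : ℤ) : WithTop ℤ)
    · rw [if_pos hcnd, if_pos hcnd]; ring
    · rw [if_neg hcnd, if_neg hcnd]; ring
  -- Fubini decomposition
  have key : ∀ x : ℝ, 0 ≤ x →
      psiMulti (Function.update r s x) l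
        = ∑' k' : {t : Fin R // t ≠ s} → ℕ,
            ∑' n : ℕ, psiTerm (Function.update r s x) l (e.symm (n, k')) := by
    intro x hx
    have hsumm : Summable (psiTerm (Function.update r s x) l) :=
      psiTerm_summable (hupd x hx) l
    have hF : Summable (fun p : ({t : Fin R // t ≠ s} → ℕ) × ℕ =>
        psiTerm (Function.update r s x) l (e.symm (p.2, p.1))) := by
      have := (((Equiv.prodComm ({t : Fin R // t ≠ s} → ℕ) ℕ).trans e.symm).summable_iff
        (f := psiTerm (Function.update r s x) l)).mpr hsumm
      exact this
    rw [psiMulti_eq_tsum]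
    rw [← e.symm.tsum_eq (psiTerm (Function.update r s x) l)]
    rw [← (Equiv.prodComm ({t : Fin R // t ≠ s} → ℕ) ℕ).tsum_eq
      (fun p : ℕ × ({t : Fin R // t ≠ s} → ℕ) =>
        psiTerm (Function.update r s x) l (e.symm p))]
    exact Summable.tsum_prod' hF (fun k' => hF.prod_factor k')
  rw [key a ha, key b hb]
  -- outer summability
  have houter : ∀ x : ℝ, 0 ≤ x →
      Summable (fun k' : {t : Fin R // t ≠ s} → ℕ =>
        ∑' n : ℕ, psiTerm (Function.update r s x) l (e.symm (n, k'))) := by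
    intro x hx
    have hsumm : Summable (psiTerm (Function.update r s x) l) :=
      psiTerm_summable (hupd x hx) l
    have hF : Summable (fun p : ({t : Fin R // t ≠ s} → ℕ) × ℕ =>
        psiTerm (Function.update r s x) l (e.symm (p.2, p.1))) := by
      have := (((Equiv.prodComm ({t : Fin R // t ≠ s} → ℕ) ℕ).trans e.symm).summable_iff
        (f := psiTerm (Function.update r s x) l)).mpr hsumm
      exact this
    have hnn : (0:({t : Fin R // t ≠ s} → ℕ) × ℕ → ℝ) ≤ (fun p =>
        psiTerm (Function.update r s x) l (e.symm (p.2, p.1))) :=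
      fun p => psiTerm_nonneg (hupd x hx) l _
    exact ((summable_prod_of_nonneg hnn).mp hF).2
  apply Summable.tsum_le_tsum _ (houter a ha) (houter b hb)
  intro k'
  -- inner comparison
  have hinner : ∀ x : ℝ,
      ∑' n : ℕ, psiTerm (Function.update r s x) l (e.symm (n, k'))
        = Pk k' * ∑' n : ℕ, (if l ≤ ((((((s:ℕ)+1) * n + c k' : ℕ)) : ℤ) : WithTop ℤ)
            then poisProb x n else 0) := by
    intro x
    rw [tsum_congr (fun n => hterm x n k'), tsum_mul_left]
  rw [hinner a, hinner b]
  apply mul_le_mul_of_nonneg_left _ (hPknn k')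
  refine pois_oneD_mono (cond := fun n =>
    l ≤ ((((((s:ℕ)+1) * n + c k' : ℕ)) : ℤ) : WithTop ℤ)) ?_ ha hab
  intro p n hpn hp
  apply le_trans hp
  have : (((s:ℕ)+1) * p + c k' : ℕ) ≤ ((((s:ℕ)+1) * n + c k' : ℕ)) := by
    have : ((s:ℕ)+1) * p ≤ ((s:ℕ)+1) * n := Nat.mul_le_mul_left _ hpn
    omega
  exact_mod_cast this

end MultiMono
section MultiMonoCont

lemma psiMulti_mono {R : ℕ} {q q' : Fin R → ℝ} (hq : ∀ s, 0 ≤ q s)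
    (hqq' : ∀ s, q s ≤ q' s) (l : WithTop ℤ) : psiMulti q l ≤ psiMulti q' l := by
  classical
  have hq' : ∀ s, 0 ≤ q' s := fun s => le_trans (hq s) (hqq' s)
  have key : ∀ S : Finset (Fin R),
      psiMulti q l ≤ psiMulti (fun t => if t ∈ S then q' t else q t) l := by
    intro S
    induction S using Finset.induction_on with
    | empty => simp
    | @insert a S' hanotin ih =>
      refine le_trans ih ?_
      set mixS := fun t => if t ∈ S' then q' t else q t with hmix
      have hmixnn : ∀ t, 0 ≤ mixS t := by
        intro t; rw [hmix]; by_cases h : t ∈ S' <;> simp [h, hq t, hq' t]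
      have e1 : mixS = Function.update mixS a (q a) := by
        funext t
        by_cases h : t = a
        · subst h; rw [Function.update_self, hmix]; simp [hanotin]
        · rw [Function.update_of_ne h]
      have e2 : (fun t => if t ∈ insert a S' then q' t else q t)
          = Function.update mixS a (q' a) := by
        funext t
        by_cases h : t = a
        · subst h; rw [Function.update_self]; simp
        · rw [Function.update_of_ne h, hmix]
          simp [Finset.mem_insert, h]
      rw [e2]
      nth_rewrite 1 [e1]
      exact psiMulti_update_mono mixS hmixnn a (hq a) (hqq' a) l
  have := key Finset.univ
  simpa using this

lemma pois_le_bound {x B : ℝ} (hx : 0 ≤ x) (hxB : x ≤ B) (m : ℕ) :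
    poisProb x m ≤ B ^ m / (Nat.factorial m : ℝ) := by
  unfold poisProb
  have h1 : Real.exp (-x) ≤ 1 := Real.exp_le_one_iff.mpr (by linarith)
  have h2 : x ^ m ≤ B ^ m := pow_le_pow_left₀ hx hxB m
  have h3 : (0:ℝ) < (Nat.factorial m : ℝ) := by
    exact_mod_cast Nat.factorial_pos m
  rw [div_le_div_iff₀ h3 h3]
  have hxm : (0:ℝ) ≤ x ^ m := pow_nonneg hx m
  have e1 : Real.exp (-x) * x ^ m ≤ x ^ m := by nlinarith
  calc Real.exp (-x) * x ^ m * (Nat.factorial m : ℝ) ≤ x ^ m * (Nat.factorial m : ℝ) :=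
        mul_le_mul_of_nonneg_right e1 h3.le
    _ ≤ B ^ m * (Nat.factorial m : ℝ) := mul_le_mul_of_nonneg_right h2 h3.le

lemma summable_bound_pi {R : ℕ} {B : ℝ} (hB : 0 ≤ B) :
    Summable (fun k : Fin R → ℕ => ∏ s, B ^ (k s) / (Nat.factorial (k s) : ℝ)) := by
  refine (summable_pi_prod (f := fun _ n => B ^ n / (Nat.factorial n : ℝ))
    (c := fun _ => Real.exp B) (fun s n => by positivity) ?_).1
  intro s F
  obtain ⟨n, hn⟩ := Finset.exists_nat_subset_range F
  calc ∑ j ∈ F, B ^ j / (Nat.factorial j : ℝ)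
      ≤ ∑ j ∈ Finset.range n, B ^ j / (Nat.factorial j : ℝ) :=
        Finset.sum_le_sum_of_subset_of_nonneg hn (fun j _ _ => by positivity)
    _ ≤ Real.exp B := Real.sum_le_exp_of_nonneg hB n

open Classical in
lemma psiMulti_tendsto {R : ℕ} {q : ℕ → Fin R → ℝ} {qlim : Fin R → ℝ} {B : ℝ} (hB : 0 ≤ B)
    (hq0 : ∀ n s, 0 ≤ q n s) (hqB : ∀ n s, q n s ≤ B)
    (hconv : ∀ s, Filter.Tendsto (fun n => q n s) Filter.atTop (nhds (qlim s)))
    (l : WithTop ℤ) :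
    Filter.Tendsto (fun n => psiMulti (q n) l) Filter.atTop (nhds (psiMulti qlim l)) := by
  simp only [psiMulti_eq_tsum]
  apply tendsto_tsum_of_dominated_convergence
    (bound := fun k : Fin R → ℕ => ∏ s, B ^ (k s) / (Nat.factorial (k s) : ℝ))
    (summable_bound_pi hB)
  · intro k
    unfold psiTerm
    by_cases h : l ≤ natN k
    · simp only [if_pos h]
      unfold prodPois
      apply tendsto_finset_prod
      intro s _
      have hc : Continuous fun x : ℝ => Real.exp (-x) * x ^ (k s) / (Nat.factorial (k s) : ℝ) := by
        fun_prop
      have := (hc.tendsto (qlim s)).comp (hconv s)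
      exact this
    · simp only [if_neg h]
      exact tendsto_const_nhds
  · apply Filter.Eventually.of_forall
    intro n k
    have h1 : 0 ≤ psiTerm (q n) l k := psiTerm_nonneg (hq0 n) l k
    rw [Real.norm_eq_abs, abs_of_nonneg h1]
    refine le_trans (psiTerm_le (hq0 n) l k) ?_
    unfold prodPois
    apply Finset.prod_le_prod (fun s _ => pois_nonneg (hq0 n s) _)
    exact fun s _ => pois_le_bound (hq0 n s) (hqB n s) _

end MultiMonoCont
section IntegralLayer

variable {Ω : Type*} [MeasureSpace Ω] [IsProbabilityMeasure (volume : Measure Ω)]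
variable {R T : ℕ}

/-- the rate vector appearing inside `ψ`. -/
noncomputable def qOf (Wm : Ω → Fin R → Fin T → ℝ) (z : Fin R × Fin T × Fin T → ℝ)
    (β : Fin T) (ω : Ω) : Fin R → ℝ :=
  fun s => ∑ γ, Wm ω s γ * z (s, β, γ)

/-- integrand of `fV`. -/
noncomputable def integrandV (Wm Wp : Ω → Fin R → Fin T → ℝ) (C : Ω → WithTop ℕ)
    (A : Ω → Fin T) (v : Fin R × Fin T × Fin T) (z : Fin R × Fin T × Fin T → ℝ) (ω : Ω) : ℝ :=
  if A ω = v.2.2 then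
    Wp ω v.1 v.2.1 * psiMulti (qOf Wm z v.2.2 ω) (natCastTop (C ω))
  else 0

/-- the "expectation" part of `fV`. -/
noncomputable def FV (Wm Wp : Ω → Fin R → Fin T → ℝ) (C : Ω → WithTop ℕ)
    (A : Ω → Fin T) (z : Fin R × Fin T × Fin T → ℝ) : Fin R × Fin T × Fin T → ℝ :=
  fun v => ∫ ω, integrandV Wm Wp C A v z ω

lemma fV_eq (Wm Wp : Ω → Fin R → Fin T → ℝ) (C : Ω → WithTop ℕ) (A : Ω → Fin T)
    (v : Fin R × Fin T × Fin T) (z : Fin R × Fin T × Fin T → ℝ) :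
    fV Wm Wp C A v z = FV Wm Wp C A z v - z v := rfl

variable {Wm Wp : Ω → Fin R → Fin T → ℝ} {C : Ω → WithTop ℕ} {A : Ω → Fin T}

lemma qOf_nonneg (hWm : ∀ ω r α, 0 ≤ Wm ω r α) {z : Fin R × Fin T × Fin T → ℝ}
    (hz : z ∈ nonnegV R T) (β : Fin T) (ω : Ω) (s : Fin R) : 0 ≤ qOf Wm z β ω s :=
  Finset.sum_nonneg fun γ _ => mul_nonneg (hWm ω s γ) (hz _)

lemma qOf_mono (hWm : ∀ ω r α, 0 ≤ Wm ω r α) {z z' : Fin R × Fin T × Fin T → ℝ}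
    (hzz' : ∀ v, z v ≤ z' v) (β : Fin T) (ω : Ω) (s : Fin R) :
    qOf Wm z β ω s ≤ qOf Wm z' β ω s :=
  Finset.sum_le_sum fun γ _ => mul_le_mul_of_nonneg_left (hzz' _) (hWm ω s γ)

lemma integrandV_nonneg (hWm : ∀ ω r α, 0 ≤ Wm ω r α) (hWp : ∀ ω r α, 0 ≤ Wp ω r α)
    {z : Fin R × Fin T × Fin T → ℝ} (hz : z ∈ nonnegV R T) (v : Fin R × Fin T × Fin T) (ω : Ω) :
    0 ≤ integrandV Wm Wp C A v z ω := by
  unfold integrandV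
  by_cases h : A ω = v.2.2
  · rw [if_pos h]
    exact mul_nonneg (hWp ω v.1 v.2.1) (psiMulti_nonneg (qOf_nonneg hWm hz v.2.2 ω) _)
  · rw [if_neg h]

lemma integrandV_le (hWm : ∀ ω r α, 0 ≤ Wm ω r α) (hWp : ∀ ω r α, 0 ≤ Wp ω r α)
    {z : Fin R × Fin T × Fin T → ℝ} (hz : z ∈ nonnegV R T) (v : Fin R × Fin T × Fin T) (ω : Ω) :
    integrandV Wm Wp C A v z ω ≤ Wp ω v.1 v.2.1 := by
  unfold integrandV
  by_cases h : A ω = v.2.2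
  · rw [if_pos h]
    calc Wp ω v.1 v.2.1 * psiMulti (qOf Wm z v.2.2 ω) (natCastTop (C ω))
        ≤ Wp ω v.1 v.2.1 * 1 :=
          mul_le_mul_of_nonneg_left (psiMulti_le_one (qOf_nonneg hWm hz v.2.2 ω) _)
            (hWp ω v.1 v.2.1)
      _ = Wp ω v.1 v.2.1 := mul_one _
  · rw [if_neg h]; exact hWp ω v.1 v.2.1

lemma meas_comp_fiber {h : Ω → WithTop ℕ → ℝ} (hh : ∀ l, Measurable fun ω => h ω l)
    (hC : ∀ l : WithTop ℕ, MeasurableSet {ω | C ω = l}) :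
    Measurable fun ω => h ω (C ω) := by
  intro t ht
  have heq : (fun ω => h ω (C ω)) ⁻¹' t
      = ⋃ l : WithTop ℕ, ({ω | C ω = l} ∩ (fun ω => h ω l) ⁻¹' t) := by
    ext ω
    simp only [Set.mem_preimage, Set.mem_iUnion, Set.mem_inter_iff, Set.mem_setOf_eq]
    constructor
    · intro hω; exact ⟨C ω, rfl, hω⟩
    · rintro ⟨l, rfl, hω⟩; exact hω
  rw [heq]
  exact MeasurableSet.iUnion fun l => (hC l).inter (hh l ht)

lemma psiMulti_eq_toReal {q : Fin R → ℝ} (hq : ∀ s, 0 ≤ q s) (l : WithTop ℤ) :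
    psiMulti q l = (∑' k, ENNReal.ofReal (psiTerm q l k)).toReal := by
  rw [psiMulti_eq_tsum,
    ← ENNReal.ofReal_tsum_of_nonneg (psiTerm_nonneg hq l) (psiTerm_summable hq l),
    ENNReal.toReal_ofReal (tsum_nonneg (psiTerm_nonneg hq l))]

lemma qOf_meas (hWm : ∀ r α, Measurable fun ω => Wm ω r α)
    (z : Fin R × Fin T × Fin T → ℝ) (β : Fin T) (s : Fin R) :
    Measurable fun ω => qOf Wm z β ω s := by
  unfold qOf
  exact Finset.measurable_sum _ fun γ _ => (hWm s γ).mul_const _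

open Classical in
lemma psi_comp_meas (hWm_nonneg : ∀ ω r α, 0 ≤ Wm ω r α)
    (hWm : ∀ r α, Measurable fun ω => Wm ω r α)
    (hC : ∀ l : WithTop ℕ, MeasurableSet {ω | C ω = l})
    {z : Fin R × Fin T × Fin T → ℝ} (hz : z ∈ nonnegV R T) (β : Fin T) :
    Measurable fun ω => psiMulti (qOf Wm z β ω) (natCastTop (C ω)) := by
  apply meas_comp_fiber (h := fun ω l => psiMulti (qOf Wm z β ω) (natCastTop l)) _ hC
  intro l
  have hqnn : ∀ ω, ∀ s, 0 ≤ qOf Wm z β ω s := fun ω => qOf_nonneg hWm_nonneg hz β ω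
  have heq : (fun ω => psiMulti (qOf Wm z β ω) (natCastTop l))
      = fun ω => (∑' k, ENNReal.ofReal (psiTerm (qOf Wm z β ω) (natCastTop l) k)).toReal := by
    funext ω
    exact psiMulti_eq_toReal (hqnn ω) _
  rw [heq]
  apply ENNReal.measurable_toReal.comp
  apply Measurable.ennreal_tsum
  intro k
  apply ENNReal.measurable_ofReal.comp
  unfold psiTerm
  by_cases hcnd : (natCastTop l) ≤ natN k
  · simp only [if_pos hcnd]
    unfold prodPois
    apply Finset.measurable_prod
    intro s _
    have hc : Continuous fun x : ℝ => Real.exp (-x) * x ^ (k s) / (Nat.factorial (k s) : ℝ) := by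
      fun_prop
    have : (fun ω => poisProb (qOf Wm z β ω s) (k s))
        = (fun x : ℝ => Real.exp (-x) * x ^ (k s) / (Nat.factorial (k s) : ℝ))
            ∘ (fun ω => qOf Wm z β ω s) := rfl
    rw [this]
    exact hc.measurable.comp (qOf_meas hWm z β s)
  · simp only [if_neg hcnd]
    exact measurable_const

lemma integrandV_meas (hWm_nonneg : ∀ ω r α, 0 ≤ Wm ω r α)
    (hWm : ∀ r α, Measurable fun ω => Wm ω r α)
    (hWp : ∀ r α, Measurable fun ω => Wp ω r α) (hA : Measurable A)
    (hC : ∀ l : WithTop ℕ, MeasurableSet {ω | C ω = l})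
    {z : Fin R × Fin T × Fin T → ℝ} (hz : z ∈ nonnegV R T) (v : Fin R × Fin T × Fin T) :
    Measurable (integrandV Wm Wp C A v z) := by
  unfold integrandV
  apply Measurable.ite
  · exact hA (measurableSet_singleton v.2.2)
  · exact (hWp v.1 v.2.1).mul (psi_comp_meas hWm_nonneg hWm hC hz v.2.2)
  · exact measurable_const

lemma integrandV_int (hWm_nonneg : ∀ ω r α, 0 ≤ Wm ω r α)
    (hWp_nonneg : ∀ ω r α, 0 ≤ Wp ω r α)
    (hWm : ∀ r α, Measurable fun ω => Wm ω r α)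
    (hWp : ∀ r α, Measurable fun ω => Wp ω r α) (hA : Measurable A)
    (hC : ∀ l : WithTop ℕ, MeasurableSet {ω | C ω = l})
    (hWp_int : ∀ r α, Integrable fun ω => Wp ω r α)
    {z : Fin R × Fin T × Fin T → ℝ} (hz : z ∈ nonnegV R T) (v : Fin R × Fin T × Fin T) :
    Integrable (integrandV Wm Wp C A v z) := by
  apply Integrable.mono' (hWp_int v.1 v.2.1)
    (integrandV_meas hWm_nonneg hWm hWp hA hC hz v).aestronglyMeasurable
  apply Filter.Eventually.of_forall
  intro ω
  rw [Real.norm_eq_abs, abs_of_nonneg (integrandV_nonneg hWm_nonneg hWp_nonneg hz v ω)]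
  exact integrandV_le hWm_nonneg hWp_nonneg hz v ω

end IntegralLayer
section FVFacts

variable {Ω : Type*} [MeasureSpace Ω] [IsProbabilityMeasure (volume : Measure Ω)]
variable {R T : ℕ} {Wm Wp : Ω → Fin R → Fin T → ℝ} {C : Ω → WithTop ℕ} {A : Ω → Fin T}

lemma FV_mono (hWm_nonneg : ∀ ω r α, 0 ≤ Wm ω r α) (hWp_nonneg : ∀ ω r α, 0 ≤ Wp ω r α)
    (hWm : ∀ r α, Measurable fun ω => Wm ω r α)
    (hWp : ∀ r α, Measurable fun ω => Wp ω r α) (hA : Measurable A)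
    (hC : ∀ l : WithTop ℕ, MeasurableSet {ω | C ω = l})
    (hWp_int : ∀ r α, Integrable fun ω => Wp ω r α)
    {z z' : Fin R × Fin T × Fin T → ℝ} (hz : z ∈ nonnegV R T) (hzz' : ∀ v, z v ≤ z' v)
    (v : Fin R × Fin T × Fin T) :
    FV Wm Wp C A z v ≤ FV Wm Wp C A z' v := by
  have hz' : z' ∈ nonnegV R T := fun u => le_trans (hz u) (hzz' u)
  apply integral_mono
    (integrandV_int hWm_nonneg hWp_nonneg hWm hWp hA hC hWp_int hz v)
    (integrandV_int hWm_nonneg hWp_nonneg hWm hWp hA hC hWp_int hz' v)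
  intro ω
  unfold integrandV
  by_cases h : A ω = v.2.2
  · simp only [if_pos h]
    exact mul_le_mul_of_nonneg_left
      (psiMulti_mono (qOf_nonneg hWm_nonneg hz v.2.2 ω) (qOf_mono hWm_nonneg hzz' v.2.2 ω) _)
      (hWp_nonneg ω v.1 v.2.1)
  · simp only [if_neg h]; exact le_refl 0

lemma FV_nonneg (hWm_nonneg : ∀ ω r α, 0 ≤ Wm ω r α) (hWp_nonneg : ∀ ω r α, 0 ≤ Wp ω r α)
    {z : Fin R × Fin T × Fin T → ℝ} (hz : z ∈ nonnegV R T) (v : Fin R × Fin T × Fin T) :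
    0 ≤ FV Wm Wp C A z v :=
  integral_nonneg (fun ω => integrandV_nonneg hWm_nonneg hWp_nonneg hz v ω)

lemma FV_le (hWm_nonneg : ∀ ω r α, 0 ≤ Wm ω r α) (hWp_nonneg : ∀ ω r α, 0 ≤ Wp ω r α)
    (hWm : ∀ r α, Measurable fun ω => Wm ω r α)
    (hWp : ∀ r α, Measurable fun ω => Wp ω r α) (hA : Measurable A)
    (hC : ∀ l : WithTop ℕ, MeasurableSet {ω | C ω = l})
    (hWp_int : ∀ r α, Integrable fun ω => Wp ω r α)
    {z : Fin R × Fin T × Fin T → ℝ} (hz : z ∈ nonnegV R T) (v : Fin R × Fin T × Fin T) :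
    FV Wm Wp C A z v ≤ ∫ ω, Wp ω v.1 v.2.1 :=
  integral_mono (integrandV_int hWm_nonneg hWp_nonneg hWm hWp hA hC hWp_int hz v)
    (hWp_int v.1 v.2.1) (fun ω => integrandV_le hWm_nonneg hWp_nonneg hz v ω)

lemma FV_tendsto (hWm_nonneg : ∀ ω r α, 0 ≤ Wm ω r α) (hWp_nonneg : ∀ ω r α, 0 ≤ Wp ω r α)
    (hWm : ∀ r α, Measurable fun ω => Wm ω r α)
    (hWp : ∀ r α, Measurable fun ω => Wp ω r α) (hA : Measurable A)
    (hC : ∀ l : WithTop ℕ, MeasurableSet {ω | C ω = l})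
    (hWp_int : ∀ r α, Integrable fun ω => Wp ω r α)
    {z : ℕ → Fin R × Fin T × Fin T → ℝ} {zl : Fin R × Fin T × Fin T → ℝ} {B : ℝ}
    (hB : 0 ≤ B) (hz0 : ∀ n, z n ∈ nonnegV R T) (hzB : ∀ n v, z n v ≤ B)
    (hconv : ∀ v, Filter.Tendsto (fun n => z n v) Filter.atTop (nhds (zl v)))
    (v : Fin R × Fin T × Fin T) :
    Filter.Tendsto (fun n => FV Wm Wp C A (z n) v) Filter.atTop
      (nhds (FV Wm Wp C A zl v)) := by
  have hzl : zl ∈ nonnegV R T := fun u => ge_of_tendsto (hconv u)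
    (Filter.Eventually.of_forall fun n => hz0 n u)
  unfold FV
  apply MeasureTheory.tendsto_integral_of_dominated_convergence
    (bound := fun ω => Wp ω v.1 v.2.1)
  · exact fun n =>
      (integrandV_meas hWm_nonneg hWm hWp hA hC (hz0 n) v).aestronglyMeasurable
  · exact hWp_int v.1 v.2.1
  · intro n
    apply Filter.Eventually.of_forall
    intro ω
    rw [Real.norm_eq_abs, abs_of_nonneg (integrandV_nonneg hWm_nonneg hWp_nonneg (hz0 n) v ω)]
    exact integrandV_le hWm_nonneg hWp_nonneg (hz0 n) v ω
  · apply Filter.Eventually.of_forall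
    intro ω
    unfold integrandV
    by_cases h : A ω = v.2.2
    · simp only [if_pos h]
      apply Filter.Tendsto.const_mul
      set Bω := B * ∑ s : Fin R, ∑ γ : Fin T, Wm ω s γ with hBω
      have hBωnn : 0 ≤ Bω := mul_nonneg hB (Finset.sum_nonneg fun s _ =>
        Finset.sum_nonneg fun γ _ => hWm_nonneg ω s γ)
      apply psiMulti_tendsto (B := Bω) hBωnn
      · exact fun n s => qOf_nonneg hWm_nonneg (hz0 n) v.2.2 ω s
      · intro n s
        calc qOf Wm (z n) v.2.2 ω s
            ≤ ∑ γ, Wm ω s γ * B := Finset.sum_le_sum fun γ _ =>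
              mul_le_mul_of_nonneg_left (hzB n _) (hWm_nonneg ω s γ)
          _ = (∑ γ, Wm ω s γ) * B := by rw [Finset.sum_mul]
          _ ≤ (∑ s' : Fin R, ∑ γ : Fin T, Wm ω s' γ) * B := by
              apply mul_le_mul_of_nonneg_right _ hB
              exact Finset.single_le_sum
                (f := fun s' => ∑ γ : Fin T, Wm ω s' γ)
                (fun s' _ => Finset.sum_nonneg fun γ _ => hWm_nonneg ω s' γ)
                (Finset.mem_univ s)
          _ = Bω := by rw [hBω, mul_comm]
      · intro s
        unfold qOf
        apply tendsto_finset_sum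
        intro γ _
        exact (hconv (s, v.2.2, γ)).const_mul _
    · simp only [if_neg h]
      exact tendsto_const_nhds

end FVFacts
lemma segment_bounds {ι : Type*} {x y u : ι → ℝ} (hxy : ∀ i, x i ≤ y i)
    (hu : u ∈ segment ℝ x y) (i : ι) : x i ≤ u i ∧ u i ≤ y i := by
  obtain ⟨a, b, ha, hb, hab, rfl⟩ := hu
  have hte : (a • x + b • y) i = a * x i + b * y i := rfl
  rw [hte]
  have ha' : a = 1 - b := by linarith
  subst ha'
  have h1 : 0 ≤ b * (y i - x i) := mul_nonneg hb (sub_nonneg.mpr (hxy i))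
  have h2 : 0 ≤ (1 - b) * (y i - x i) := mul_nonneg (by linarith) (sub_nonneg.mpr (hxy i))
  constructor <;> nlinarith [h1, h2]

theorem stmt_3
    {Ω : Type*} [MeasureSpace Ω] [IsProbabilityMeasure (volume : Measure Ω)]
    {R T : ℕ} (hR : 0 < R) (hT : 0 < T)
    (Wm Wp : Ω → Fin R → Fin T → ℝ) (S : Ω → ℝ) (C : Ω → WithTop ℕ) (A : Ω → Fin T)
    (hWm_nonneg : ∀ ω r α, 0 ≤ Wm ω r α) (hWp_nonneg : ∀ ω r α, 0 ≤ Wp ω r α)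
    (hS_nonneg : ∀ ω, 0 ≤ S ω)
    (hWm_meas : ∀ r α, Measurable fun ω => Wm ω r α)
    (hWp_meas : ∀ r α, Measurable fun ω => Wp ω r α)
    (hS_meas : Measurable S) (hA_meas : Measurable A)
    (hC_meas : ∀ l : WithTop ℕ, MeasurableSet {ω | C ω = l})
    (hWm_int : ∀ r α, Integrable fun ω => Wm ω r α)
    (hWp_int : ∀ r α, Integrable fun ω => Wp ω r α)
    (hS_int : Integrable S)
    :
    (∃ zhat : (Fin R × Fin T × Fin T) → ℝ,
      zhat ∈ nonnegV R T ∧ (∀ v, fV Wm Wp C A v zhat = 0) ∧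
      (∀ zbar ∈ nonnegV R T, (∀ v, fV Wm Wp C A v zbar = 0) → ∀ v, zhat v ≤ zbar v) ∧
      zhat ∈ P0V Wm Wp C A) ∧
    (∀ v, fV Wm Wp C A v (zStarV Wm Wp C A) = 0) ∧
    zStarV Wm Wp C A ∈ P0V Wm Wp C A := by
  classical
  haveI hVne : Nonempty (Fin R × Fin T × Fin T) := ⟨(⟨0, hR⟩, ⟨0, hT⟩, ⟨0, hT⟩)⟩
  set V := Fin R × Fin T × Fin T
  set Φ : (V → ℝ) → (V → ℝ) := FV Wm Wp C A with hΦdef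
  have hmono : ∀ {z z' : V → ℝ}, z ∈ nonnegV R T → (∀ v, z v ≤ z' v) →
      ∀ v, Φ z v ≤ Φ z' v := fun hz hzz' v =>
    FV_mono hWm_nonneg hWp_nonneg hWm_meas hWp_meas hA_meas hC_meas hWp_int hz hzz' v
  have hF0 : ∀ {z : V → ℝ}, z ∈ nonnegV R T → ∀ v, 0 ≤ Φ z v :=
    fun hz v => FV_nonneg hWm_nonneg hWp_nonneg hz v
  have hFle : ∀ {z : V → ℝ}, z ∈ nonnegV R T → ∀ v, Φ z v ≤ ∫ ω, Wp ω v.1 v.2.1 :=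
    fun hz v => FV_le hWm_nonneg hWp_nonneg hWm_meas hWp_meas hA_meas hC_meas hWp_int hz v
  have hfv : ∀ (v : V) (z : V → ℝ), fV Wm Wp C A v z = Φ z v - z v :=
    fun v z => fV_eq Wm Wp C A v z
  set P : Set (V → ℝ) := PsetV Wm Wp C A with hPdef
  set P0 : Set (V → ℝ) := P0V Wm Wp C A with hP0def
  have hP0cc : P0 = connectedComponentIn P 0 := rfl
  have hPiff : ∀ z : V → ℝ, z ∈ P ↔ (z ∈ nonnegV R T ∧ ∀ v, z v ≤ Φ z v) := by
    intro z
    rw [hPdef]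
    unfold PsetV
    simp only [Set.mem_setOf_eq, hfv]
    constructor <;> rintro ⟨h1, h2⟩ <;> exact ⟨h1, fun v => by have := h2 v; linarith⟩
  have h0nn : (0 : V → ℝ) ∈ nonnegV R T := fun v => le_refl 0
  have h0P : (0 : V → ℝ) ∈ P := (hPiff 0).mpr ⟨h0nn, fun v => hF0 h0nn v⟩
  have h0P0 : (0 : V → ℝ) ∈ P0 := mem_connectedComponentIn h0P
  have hP0subP : P0 ⊆ P := connectedComponentIn_subset P 0
  have hP0nn : ∀ z ∈ P0, z ∈ nonnegV R T := fun z hz => ((hPiff z).mp (hP0subP hz)).1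
  have habsorb : ∀ s : Set (V → ℝ), IsPreconnected s → s ⊆ P →
      (∃ y, y ∈ s ∧ y ∈ P0) → s ⊆ P0 := by
    rintro s hs hsP ⟨y, hys, hyP0⟩
    rw [hP0cc, connectedComponentIn_eq (x := 0) (y := y) hyP0]
    exact hs.subset_connectedComponentIn hys hsP
  -- Φ maps P0 into P0
  have hΦP0 : ∀ z ∈ P0, Φ z ∈ P0 := by
    intro z hz
    have hzP := hP0subP hz
    have hznn := hP0nn z hz
    have hzle : ∀ v, z v ≤ Φ z v := ((hPiff z).mp hzP).2
    have hseg : segment ℝ z (Φ z) ⊆ P := by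
      intro u hu
      have hb := segment_bounds hzle hu
      rw [hPiff u]
      have hunn : u ∈ nonnegV R T := fun v => le_trans (hznn v) (hb v).1
      refine ⟨hunn, fun v => ?_⟩
      calc u v ≤ Φ z v := (hb v).2
        _ ≤ Φ u v := hmono hznn (fun w => (hb w).1) v
    have : segment ℝ z (Φ z) ⊆ P0 :=
      habsorb _ (convex_segment z (Φ z)).isPreconnected hseg ⟨z, left_mem_segment ℝ z (Φ z), hz⟩
    exact this (right_mem_segment ℝ z (Φ z))
  -- P0 is closed under pointwise max
  have hjoin : ∀ z ∈ P0, ∀ z' ∈ P0, z ⊔ z' ∈ P0 := by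
    intro z hz z' hz'
    have hcont : Continuous fun u : V → ℝ => z ⊔ u := by
      apply continuous_pi
      intro v
      have : (fun u : V → ℝ => (z ⊔ u) v) = fun u => z v ⊔ u v := rfl
      rw [this]
      exact continuous_const.sup (continuous_apply v)
    set s := (fun u : V → ℝ => z ⊔ u) '' P0 with hs
    have hsP : s ⊆ P := by
      rintro _ ⟨u, huP0, rfl⟩
      have hunn := hP0nn u huP0
      have hznn := hP0nn z hz
      have hzle : ∀ v, z v ≤ Φ z v := ((hPiff z).mp (hP0subP hz)).2
      have hule : ∀ v, u v ≤ Φ u v := ((hPiff u).mp (hP0subP huP0)).2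
      rw [hPiff]
      have hjnn : (z ⊔ u) ∈ nonnegV R T := fun v => le_trans (hznn v) le_sup_left
      refine ⟨hjnn, fun v => ?_⟩
      have h1 : Φ z v ≤ Φ (z ⊔ u) v := hmono hznn (fun w => le_sup_left) v
      have h2 : Φ u v ≤ Φ (z ⊔ u) v := hmono hunn (fun w => le_sup_right) v
      show (z ⊔ u) v ≤ Φ (z ⊔ u) v
      exact max_le (le_trans (hzle v) h1) (le_trans (hule v) h2)
    have hsconn : IsPreconnected s :=
      (hP0cc ▸ isPreconnected_connectedComponentIn).image _ hcont.continuousOn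
    have hzmem : z ∈ s := ⟨z, hz, by simp⟩
    exact habsorb s hsconn hsP ⟨z, hzmem, hz⟩ ⟨z', hz', rfl⟩
  -- P is closed
  have hPclosed : IsClosed P := by
    apply IsSeqClosed.isClosed
    intro z zl hzmem htend
    have hconv : ∀ v, Filter.Tendsto (fun n => z n v) Filter.atTop (nhds (zl v)) :=
      fun v => (tendsto_pi_nhds.mp htend) v
    have hznn : ∀ n, z n ∈ nonnegV R T := fun n => ((hPiff _).mp (hzmem n)).1
    have hzlnn : zl ∈ nonnegV R T := fun v =>
      ge_of_tendsto (hconv v) (Filter.Eventually.of_forall fun n => hznn n v)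
    set b : V → ℝ := fun v => sSup (Set.range fun n => z n v) with hb
    have hbv : ∀ (n : ℕ) (v : V), z n v ≤ b v := by
      intro n v
      exact le_csSup ((hconv v).bddAbove_range) ⟨n, rfl⟩
    have hb0 : ∀ v, 0 ≤ b v := fun v => le_trans (hznn 0 v) (hbv 0 v)
    set B : ℝ := ∑ v : V, b v with hB
    have hBnn : 0 ≤ B := Finset.sum_nonneg fun v _ => hb0 v
    have hzB : ∀ (n : ℕ) (v : V), z n v ≤ B := by
      intro n v
      exact le_trans (hbv n v)
        (Finset.single_le_sum (fun w _ => hb0 w) (Finset.mem_univ v))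
    rw [hPiff]
    refine ⟨hzlnn, fun v => ?_⟩
    have hΦconv := FV_tendsto hWm_nonneg hWp_nonneg hWm_meas hWp_meas hA_meas hC_meas
      hWp_int hBnn hznn hzB hconv v
    refine le_of_tendsto_of_tendsto (hconv v) hΦconv
      (Filter.Eventually.of_forall fun n => ?_)
    exact ((hPiff (z n)).mp (hzmem n)).2 v
  have hP0closed : IsClosed P0 := by
    apply isClosed_of_closure_subset
    apply habsorb
    · exact (hP0cc ▸ isPreconnected_connectedComponentIn).closure
    · exact closure_minimal hP0subP hPclosed
    · exact ⟨0, subset_closure h0P0, h0P0⟩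
  -- upper bounds
  set M : V → ℝ := fun v => ∫ ω, Wp ω v.1 v.2.1 with hM
  have hP0ub : ∀ v : V, ∀ z ∈ P0, z v ≤ M v := by
    intro v z hz
    exact le_trans (((hPiff z).mp (hP0subP hz)).2 v) (hFle (hP0nn z hz) v)
  set zs : V → ℝ := zStarV Wm Wp C A with hzs
  have hzsdef : ∀ v, zs v = sSup ((fun z : V → ℝ => z v) '' P0) := fun v => rfl
  have hbdd : ∀ v : V, BddAbove ((fun z : V → ℝ => z v) '' P0) := by
    intro v
    exact ⟨M v, by rintro _ ⟨z, hz, rfl⟩; exact hP0ub v z hz⟩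
  have hzsub : ∀ z ∈ P0, ∀ v, z v ≤ zs v := by
    intro z hz v
    rw [hzsdef v]
    exact le_csSup (hbdd v) ⟨z, hz, rfl⟩
  -- approximating sequence for the supremum
  have hex : ∀ (n : ℕ) (v : V), ∃ zz, zz ∈ P0 ∧ zs v - 1/(n+1) < zz v := by
    intro n v
    have hne : ((fun z : V → ℝ => z v) '' P0).Nonempty := ⟨0, 0, h0P0, rfl⟩
    have hlt : zs v - 1/(n+1) < sSup ((fun z : V → ℝ => z v) '' P0) := by
      rw [← hzsdef v]
      have hpos : (0:ℝ) < 1/(n+1) := by positivity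
      linarith
    obtain ⟨a, ⟨zz, hzz, rfl⟩, hlt'⟩ := exists_lt_of_lt_csSup hne hlt
    exact ⟨zz, hzz, hlt'⟩
  choose g hg1 hg2 using hex
  set Y : ℕ → V → ℝ := fun n => Finset.univ.sup' Finset.univ_nonempty (g n) with hY
  have hYP0 : ∀ n, Y n ∈ P0 := fun n =>
    Finset.sup'_mem P0 hjoin Finset.univ Finset.univ_nonempty (g n) (fun v _ => hg1 n v)
  have hYlb : ∀ n v, zs v - 1/(n+1) < Y n v := by
    intro n v
    have hle : g n v ≤ Y n := Finset.le_sup' (g n) (Finset.mem_univ v)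
    exact lt_of_lt_of_le (hg2 n v) (hle v)
  have hYub : ∀ n v, Y n v ≤ zs v := fun n v => hzsub _ (hYP0 n) v
  have hYtend : Filter.Tendsto Y Filter.atTop (nhds zs) := by
    rw [tendsto_pi_nhds]
    intro v
    have hlow : Filter.Tendsto (fun n : ℕ => zs v - 1/(n+1)) Filter.atTop (nhds (zs v)) := by
      simpa using Filter.Tendsto.sub (tendsto_const_nhds (x := zs v))
        tendsto_one_div_add_atTop_nhds_zero_nat
    exact tendsto_of_tendsto_of_tendsto_of_le_of_le hlow tendsto_const_nhds
      (fun n => le_of_lt (hYlb n v)) (fun n => hYub n v)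
  have hzsP0 : zs ∈ P0 := hP0closed.mem_of_tendsto hYtend (Filter.Eventually.of_forall hYP0)
  -- z* is a root
  have hzsroot : ∀ v, fV Wm Wp C A v zs = 0 := by
    intro v
    have h1 : zs v ≤ Φ zs v := ((hPiff zs).mp (hP0subP hzsP0)).2 v
    have h2 : Φ zs v ≤ zs v := hzsub _ (hΦP0 zs hzsP0) v
    rw [hfv]
    linarith
  -- iteration from 0
  set seq : ℕ → V → ℝ := fun n => Φ^[n] 0 with hseq
  have hseq0 : seq 0 = 0 := rfl
  have hseqS : ∀ n, seq (n+1) = Φ (seq n) := by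
    intro n
    rw [hseq]
    exact Function.iterate_succ_apply' Φ n 0
  have hseqP0 : ∀ n, seq n ∈ P0 := by
    intro n
    induction n with
    | zero => exact h0P0
    | succ n ih => rw [hseqS n]; exact hΦP0 _ ih
  have hseqmono : ∀ n v, seq n v ≤ seq (n+1) v := by
    intro n
    induction n with
    | zero =>
      intro v
      rw [hseqS 0, hseq0]
      exact hF0 h0nn v
    | succ n ih =>
      intro v
      rw [hseqS (n+1), hseqS n]
      exact hmono (hP0nn _ (hseqP0 n)) (fun w => by rw [← hseqS n]; exact ih w) v
  have hseqle : ∀ n v, seq n v ≤ zs v := fun n v => hzsub _ (hseqP0 n) v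
  set zh : V → ℝ := fun v => ⨆ n, seq n v with hzh
  have hmonov : ∀ v, Monotone fun n => seq n v := fun v =>
    monotone_nat_of_le_succ (fun n => hseqmono n v)
  have hbddv : ∀ v, BddAbove (Set.range fun n => seq n v) := fun v =>
    ⟨zs v, by rintro _ ⟨n, rfl⟩; exact hseqle n v⟩
  have hzhtend : ∀ v, Filter.Tendsto (fun n => seq n v) Filter.atTop (nhds (zh v)) :=
    fun v => tendsto_atTop_ciSup (hmonov v) (hbddv v)
  have hzhP0 : zh ∈ P0 :=
    hP0closed.mem_of_tendsto (tendsto_pi_nhds.mpr hzhtend) (Filter.Eventually.of_forall hseqP0)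
  have hzhnn : zh ∈ nonnegV R T := hP0nn zh hzhP0
  have hB2 : (0:ℝ) ≤ ∑ w : V, zh w := Finset.sum_nonneg fun w _ => hzhnn w
  have hzhB : ∀ (n : ℕ) (v : V), seq n v ≤ ∑ w : V, zh w := by
    intro n v
    calc seq n v ≤ zh v := le_ciSup (hbddv v) n
      _ ≤ ∑ w : V, zh w := Finset.single_le_sum (fun w _ => hzhnn w) (Finset.mem_univ v)
  have hΦtend : ∀ v, Filter.Tendsto (fun n => Φ (seq n) v) Filter.atTop (nhds (Φ zh v)) :=
    fun v => FV_tendsto hWm_nonneg hWp_nonneg hWm_meas hWp_meas hA_meas hC_meas hWp_int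
      hB2 (fun n => hP0nn _ (hseqP0 n)) hzhB hzhtend v
  have hshift : ∀ v, Filter.Tendsto (fun n => seq (n+1) v) Filter.atTop (nhds (zh v)) :=
    fun v => (hzhtend v).comp (tendsto_add_atTop_nat 1)
  have hfix : ∀ v, Φ zh v = zh v := by
    intro v
    have he : (fun n => Φ (seq n) v) = fun n => seq (n+1) v :=
      funext fun n => by rw [hseqS n]
    exact tendsto_nhds_unique (he ▸ hΦtend v) (hshift v)
  have hzhroot : ∀ v, fV Wm Wp C A v zh = 0 := by
    intro v
    rw [hfv, hfix v]
    ring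
  have hmin : ∀ zbar ∈ nonnegV R T, (∀ v, fV Wm Wp C A v zbar = 0) → ∀ v, zh v ≤ zbar v := by
    intro zbar hzbar hroot v
    have hfixb : ∀ v, Φ zbar v = zbar v := by
      intro w
      have := hroot w
      rw [hfv] at this
      linarith
    have hind : ∀ n (w : V), seq n w ≤ zbar w := by
      intro n
      induction n with
      | zero => intro w; rw [hseq0]; exact hzbar w
      | succ n ih =>
        intro w
        rw [hseqS n]
        calc Φ (seq n) w ≤ Φ zbar w := hmono (hP0nn _ (hseqP0 n)) ih w
          _ = zbar w := hfixb w
    exact ciSup_le (fun n => hind n v)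
  exact ⟨⟨zh, hzhnn, hzhroot, hmin, hzhP0⟩, hzsroot, hzsP0⟩
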